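/- Let a > c and d > b (coordination game) and let δ satisfy 0 < δ < (d−b)/(a+d−b−c). Let φ : ℝ → ℝ be continuously differentiable with φ(x) < 0 for all x ∈ [0,δ), φ(x) > 0 for all x ∈ (δ,1], and such that there exists ε* > 0 with φ(x) > a − c for all x ∈ [1−ε*, 1]. Then every solution (x, g) of the conformity-gain controlled replicator equation with x(0) ∈ [0,1) and g(0) > 0 satisfies x(t) → 0 and g(t) → 0 as t → ∞. -/

import Mathlib

open Set Filter Topology

/-- If `f s < f t₂` for all `s ∈ [T, t₂)` and `f` has derivative `d` at `t₂ > T`,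
then `d ≥ 0`. -/
lemma deriv_nonneg_left {f : ℝ → ℝ} {d T t₂ : ℝ} (hT : T < t₂)
    (hlt : ∀ s, T ≤ s → s < t₂ → f s < f t₂) (hd : HasDerivAt f d t₂) : 0 ≤ d := by
  have hslope : Tendsto (slope f t₂) (𝓝[<] t₂) (𝓝 d) :=
    (hasDerivAt_iff_tendsto_slope.1 hd).mono_left
      (nhdsWithin_mono _ (fun s hs => ne_of_lt hs))
  refine ge_of_tendsto hslope ?_
  filter_upwards [Ioo_mem_nhdsLT_of_mem (⟨hT, le_rfl⟩ : t₂ ∈ Ioc T t₂)] with s hs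
  have h1 : f s < f t₂ := hlt s hs.1.le hs.2
  have h2 : s - t₂ < 0 := by linarith [hs.2]
  rw [slope_def_field]
  rw [div_nonneg_iff]
  right
  constructor <;> [skip; linarith]
  · have : f s - f t₂ ≤ 0 := by linarith
    simpa [slope] using this

lemma first_cross {f : ℝ → ℝ} {T v t₁ : ℝ} (hc : ∀ t, T ≤ t → ContinuousAt f t)
    (h0 : f T < v) (ht₁ : T ≤ t₁) (hft₁ : v ≤ f t₁) :
    ∃ t₂, T < t₂ ∧ f t₂ = v ∧ ∀ s, T ≤ s → s < t₂ → f s < v := by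
  classical
  set S : Set ℝ := {t | T ≤ t ∧ v ≤ f t} with hS
  have hne : S.Nonempty := ⟨t₁, ht₁, hft₁⟩
  have hbd : BddBelow S := ⟨T, fun s hs => hs.1⟩
  set t₂ := sInf S with ht₂def
  have hT2 : T ≤ t₂ := le_csInf hne fun s hs => hs.1
  have before : ∀ s, T ≤ s → s < t₂ → f s < v := by
    intro s hsT hst
    by_contra h
    push_neg at h
    exact absurd (csInf_le hbd ⟨hsT, h⟩) (not_le.2 hst)
  -- T < t₂
  have hTlt : T < t₂ := by
    have hev : ∀ᶠ s in 𝓝 T, f s < v := (hc T le_rfl).eventually_lt continuousAt_const h0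
    obtain ⟨η, hη, hball⟩ := Metric.eventually_nhds_iff.1 hev
    have : T + η / 2 ≤ t₂ := by
      apply le_csInf hne
      intro s hs
      by_contra h
      push_neg at h
      have hd : dist s T < η := by
        rw [Real.dist_eq, abs_of_nonneg (by linarith [hs.1])]
        linarith [hs.1]
      exact absurd hs.2 (not_le.2 (hball hd))
    linarith
  have hub : f t₂ ≤ v := by
    have htend : Tendsto f (𝓝[<] t₂) (𝓝 (f t₂)) :=
      ((hc t₂ hT2).continuousWithinAt).tendsto
    refine le_of_tendsto htend ?_
    filter_upwards [Ioo_mem_nhdsLT_of_mem (⟨hTlt, le_rfl⟩ : t₂ ∈ Ioc T t₂)] with s hs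
    exact (before s hs.1.le hs.2).le
  have hlb : v ≤ f t₂ := by
    by_contra h
    push_neg at h
    have hev : ∀ᶠ s in 𝓝 t₂, f s < v := (hc t₂ hT2).eventually_lt continuousAt_const h
    obtain ⟨η, hη, hball⟩ := Metric.eventually_nhds_iff.1 hev
    have : t₂ + η ≤ t₂ := by
      apply le_csInf hne
      intro s hs
      by_contra hcon
      push_neg at hcon
      have : f s < v := by
        rcases le_or_gt s t₂ with hle | hgt
        · rcases lt_or_ge s t₂ with hlt2 | heq
          · by_cases hnear : dist s t₂ < η
            · exact hball hnear
            · exact before s hs.1 hlt2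
          · have : s = t₂ := le_antisymm hle heq
            rw [this]; exact h
        · have : dist s t₂ < η := by
            rw [Real.dist_eq, abs_of_nonneg (by linarith)]
            linarith
          exact hball this
      exact absurd hs.2 (not_le.2 this)
    linarith
  exact ⟨t₂, hTlt, le_antisymm hub hlb, before⟩

lemma stay_below {f d : ℝ → ℝ} {T v : ℝ}
    (hd : ∀ t, T ≤ t → HasDerivAt f (d t) t)
    (h0 : f T < v)
    (hneg : ∀ t, T < t → f t = v → d t < 0) :
    ∀ t, T ≤ t → f t < v := by
  intro t ht
  by_contra h
  push_neg at h
  obtain ⟨t₂, hTlt, hft₂, hbefore⟩ :=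
    first_cross (fun s hs => (hd s hs).continuousAt) h0 ht h
  have h0le : (0:ℝ) ≤ d t₂ := by
    refine deriv_nonneg_left hTlt (fun s hs hst => ?_) (hd t₂ (le_of_lt hTlt))
    rw [hft₂]; exact hbefore s hs hst
  exact absurd (hneg t₂ hTlt hft₂) (not_lt.2 h0le)

lemma stay_above {f d : ℝ → ℝ} {T v : ℝ}
    (hd : ∀ t, T ≤ t → HasDerivAt f (d t) t)
    (h0 : v < f T)
    (hpos : ∀ t, T < t → f t = v → 0 < d t) :
    ∀ t, T ≤ t → v < f t := by
  intro t ht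
  have := stay_below (f := fun s => -f s) (d := fun s => -d s) (v := -v)
    (fun s hs => (hd s hs).neg) (by simpa using h0)
    (fun s hs hfs => by
      have : f s = v := by have h' : -f s = -v := hfs; linarith
      simpa using hpos s hs this) t ht
  simpa using this

/-- Monotonicity on `[T, ∞)` from pointwise derivatives. -/
lemma mono_Ici {f d : ℝ → ℝ} {T : ℝ}
    (hd : ∀ t, T ≤ t → HasDerivAt f (d t) t)
    (h0 : ∀ t, T ≤ t → 0 ≤ d t) :
    ∀ s t, T ≤ s → s ≤ t → f s ≤ f t := by
  intro s t hs hst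
  have hmono : MonotoneOn f (Ici T) := by
    apply monotoneOn_of_deriv_nonneg (convex_Ici T)
    · exact fun u hu => ((hd u hu).continuousAt).continuousWithinAt
    · intro u hu
      rw [interior_Ici] at hu
      exact ((hd u (le_of_lt hu)).differentiableAt).differentiableWithinAt
    · intro u hu
      rw [interior_Ici] at hu
      rw [(hd u (le_of_lt hu)).deriv]
      exact h0 u (le_of_lt hu)
  exact hmono hs (le_trans hs hst) hst

lemma mono_Icc {f d : ℝ → ℝ} {T₁ T₂ : ℝ} (hT : T₁ ≤ T₂)
    (hd : ∀ t, t ∈ Icc T₁ T₂ → HasDerivAt f (d t) t)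
    (h0 : ∀ t, t ∈ Ioo T₁ T₂ → 0 ≤ d t) :
    f T₁ ≤ f T₂ := by
  have hmono : MonotoneOn f (Icc T₁ T₂) := by
    apply monotoneOn_of_deriv_nonneg (convex_Icc T₁ T₂)
    · exact fun u hu => ((hd u hu).continuousAt).continuousWithinAt
    · intro u hu
      rw [interior_Icc] at hu
      exact ((hd u (Ioo_subset_Icc_self hu)).differentiableAt).differentiableWithinAt
    · intro u hu
      rw [interior_Icc] at hu
      rw [(hd u (Ioo_subset_Icc_self hu)).deriv]
      exact h0 u hu
  exact hmono (left_mem_Icc.2 hT) (right_mem_Icc.2 hT) hT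
lemma hasDerivAt_mul_exp {f : ℝ → ℝ} {f' c t : ℝ} (hf : HasDerivAt f f' t) :
    HasDerivAt (fun s => f s * Real.exp (c * s)) ((f' + c * f t) * Real.exp (c * t)) t := by
  have he : HasDerivAt (fun s : ℝ => Real.exp (c * s)) (Real.exp (c * t) * (c * 1)) t :=
    ((hasDerivAt_id t).const_mul c).exp
  have : HasDerivAt (fun s => f s * Real.exp (c * s)) _ t := hf.mul he
  convert this using 1
  ring

lemma hasDerivAt_linear_shift {f : ℝ → ℝ} {f' c t : ℝ} (hf : HasDerivAt f f' t) :
    HasDerivAt (fun s => f s - c * s) (f' - c) t := by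
  have : HasDerivAt (fun s => f s - c * s) (f' - c * 1) t := hf.sub ((hasDerivAt_id t).const_mul c)
  simpa using this

/-- `(x, g)` is a solution of the conformity-gain controlled replicator equation
(control matrix `G⁽⁴⁾`): `ẋ = x(1−x)((a+d−b−c)x + b − d − g(1−x))`, `ġ = φ(x) g`. -/
def IsConformitySolution (a b c d : ℝ) (φ : ℝ → ℝ) (x g : ℝ → ℝ) : Prop :=
  ∀ t : ℝ, 0 ≤ t →
    HasDerivAt x
      (x t * (1 - x t) * ((a + d - b - c) * x t + (b - d) - g t * (1 - x t))) t ∧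
    HasDerivAt g (φ (x t) * g t) t

set_option maxHeartbeats 1000000 in
/-- Consensus reaching via the conformity-gain controller in a coordination game. -/
theorem consensus_reaching_conformity (a b c d δ : ℝ) (hac : a > c) (hdb : d > b)
    (hδ0 : 0 < δ) (hδ : δ < (d - b) / (a + d - b - c))
    (φ : ℝ → ℝ) (hφ : ContDiff ℝ 1 φ)
    (h1 : ∀ y : ℝ, 0 ≤ y → y < δ → φ y < 0)
    (h2 : ∀ y : ℝ, δ < y → y ≤ 1 → 0 < φ y)
    (h3 : ∃ ε : ℝ, 0 < ε ∧ ∀ y : ℝ, 1 - ε ≤ y → y ≤ 1 → a - c < φ y)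
    (x g : ℝ → ℝ) (hsol : IsConformitySolution a b c d φ x g)
    (hx0 : x 0 ∈ Set.Ico (0 : ℝ) 1) (hg0 : 0 < g 0) :
    Filter.Tendsto x Filter.atTop (nhds 0) ∧
    Filter.Tendsto g Filter.atTop (nhds 0) := by
  obtain ⟨ε₀, hε₀pos, hε₀⟩ := h3
  obtain ⟨hx00, hx01⟩ := hx0
  have hφc : Continuous φ := hφ.continuous
  have hA : 0 < a + d - b - c := by linarith
  obtain ⟨xs, hxsdef⟩ : ∃ w : ℝ, w = (d - b) / (a + d - b - c) := ⟨_, rfl⟩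
  rw [← hxsdef] at hδ
  have hxspos : 0 < xs := by rw [hxsdef]; exact div_pos (by linarith) hA
  have hxs1 : xs < 1 := by rw [hxsdef]; exact (div_lt_one hA).2 (by linarith)
  have hAxs : (a + d - b - c) * xs = d - b := by
    rw [hxsdef]; field_simp
  obtain ⟨XD, hXDdef⟩ : ∃ w : ℝ → ℝ,
      w = fun t => x t * (1 - x t) * ((a + d - b - c) * x t + (b - d) - g t * (1 - x t)) :=
    ⟨_, rfl⟩
  have hx' : ∀ t, 0 ≤ t → HasDerivAt x (XD t) t := by
    intro t ht
    simp only [hXDdef]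
    exact (hsol t ht).1
  have hg' : ∀ t, 0 ≤ t → HasDerivAt g (φ (x t) * g t) t := fun t ht => (hsol t ht).2
  -- positivity of g
  have hgpos : ∀ t, 0 ≤ t → 0 < g t := by
    intro t ht
    by_contra h
    push_neg at h
    obtain ⟨t₂, ht₂pos, hgt₂, hbefore⟩ := first_cross (f := fun s => -g s) (T := 0) (v := 0)
      (fun s hs => ((hsol s hs).2.continuousAt).neg) (by simpa using hg0) ht (by simpa using h)
    have hgt₂0 : g t₂ = 0 := by simpa [neg_eq_zero] using hgt₂
    have hgbefore : ∀ s, 0 ≤ s → s < t₂ → 0 < g s := by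
      intro s hh1 hh2
      have := hbefore s hh1 hh2
      simpa using this
    have hcx : ContinuousOn (fun s => φ (x s)) (Icc 0 t₂) := by
      apply hφc.comp_continuousOn
      exact fun s hs => ((hsol s hs.1).1.continuousAt).continuousWithinAt
    obtain ⟨s₀, hs₀, hmin⟩ := isCompact_Icc.exists_isMinOn
      ⟨0, left_mem_Icc.2 ht₂pos.le⟩ hcx
    have key : g 0 * Real.exp (-φ (x s₀) * 0) ≤ g t₂ * Real.exp (-φ (x s₀) * t₂) := by
      apply mono_Icc (f := fun s => g s * Real.exp (-φ (x s₀) * s)) (d := fun s =>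
          (φ (x s) * g s + -φ (x s₀) * g s) * Real.exp (-φ (x s₀) * s)) ht₂pos.le
      · intro s hs
        exact hasDerivAt_mul_exp ((hsol s hs.1).2)
      · intro s hs
        have hmle := isMinOn_iff.1 hmin s (Ioo_subset_Icc_self hs)
        have hgs := hgbefore s hs.1.le hs.2
        have hex := Real.exp_pos (-φ (x s₀) * s)
        nlinarith [mul_nonneg (mul_nonneg (sub_nonneg.2 hmle) hgs.le) hex.le]
    rw [hgt₂0] at key
    simp at key
    nlinarith [Real.exp_pos (-φ (x s₀) * t₂)]
  -- lower bound for x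
  have hxlb : ∀ t, 0 ≤ t → 0 ≤ x t := by
    intro t ht
    by_contra h
    push_neg at h
    have := stay_above (f := x) (d := XD) (T := 0) (v := x t) hx'
      (lt_of_lt_of_le h hx00) ?_ t ht
    · exact lt_irrefl _ this
    · intro s hs hxs
      have hgs := hgpos s hs.le
      simp only [hXDdef]
      rw [hxs]
      have hv : x t < 0 := h
      have hfac1 : x t * (1 - x t) < 0 := mul_neg_of_neg_of_pos hv (by linarith)
      have hfac2 : (a + d - b - c) * x t + (b - d) - g s * (1 - x t) < 0 := by
        nlinarith [mul_pos hgs (show (0:ℝ) < 1 - x t by linarith),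
          mul_pos_of_neg_of_neg (neg_neg_iff_pos.mpr hA) hv]
      exact mul_pos_of_neg_of_neg hfac1 hfac2
  -- x * F x ≤ a - c on [0,1]
  have hxF : ∀ u : ℝ, 0 ≤ u → u ≤ 1 →
      u * ((a + d - b - c) * u + (b - d)) ≤ a - c := by
    intro u h0 h1'
    nlinarith [mul_nonneg (sub_nonneg.2 h1')
      (add_nonneg (mul_nonneg hA.le h0) (le_of_lt (sub_pos.2 hac)))]
  -- upper bound for x
  have hxub : ∀ t, 0 ≤ t → x t < 1 := by
    intro t ht
    by_contra h
    push_neg at h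
    obtain ⟨t₂, ht₂pos, hxt₂, hbefore⟩ := first_cross (f := x) (T := 0) (v := 1)
      (fun s hs => (hsol s hs).1.continuousAt) hx01 ht h
    have key : (1 - x 0) * Real.exp ((a - c) * 0) ≤ (1 - x t₂) * Real.exp ((a - c) * t₂) := by
      apply mono_Icc (f := fun s => (1 - x s) * Real.exp ((a - c) * s)) (d := fun s =>
          ((0 - XD s) + (a - c) * (1 - x s)) * Real.exp ((a - c) * s)) ht₂pos.le
      · intro s hs
        exact hasDerivAt_mul_exp ((hasDerivAt_const s (1:ℝ)).sub (hx' s hs.1))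
      · intro s hs
        have hx1 : 0 ≤ x s := hxlb s hs.1.le
        have hx2 : x s < 1 := hbefore s hs.1.le hs.2
        have h3' := hxF (x s) hx1 hx2.le
        have h4 : 0 < g s := hgpos s hs.1.le
        have h5 := Real.exp_pos ((a - c) * s)
        simp only [hXDdef]
        nlinarith [mul_nonneg (mul_nonneg hx1 (show (0:ℝ) ≤ 1 - x s by linarith))
            (mul_nonneg h4.le (show (0:ℝ) ≤ 1 - x s by linarith)),
          mul_le_mul_of_nonneg_left h3' (show (0:ℝ) ≤ 1 - x s by linarith)]
    rw [hxt₂] at key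
    simp at key
    nlinarith [Real.exp_pos ((a - c) * 0)]
  have h1x : ∀ t, 0 ≤ t → 0 < 1 - x t := fun t ht => by linarith [hxub t ht]
  -- derivative of log (g ·)
  have hlgD : ∀ s, 0 ≤ s → HasDerivAt (fun u => Real.log (g u)) (φ (x s)) s := by
    intro s hs
    have h := (hg' s hs).log (ne_of_gt (hgpos s hs))
    convert h using 1
    rw [mul_div_assoc, div_self (ne_of_gt (hgpos s hs)), mul_one]
  -- derivative of log (1 - x ·)
  obtain ⟨LD, hLDdef⟩ : ∃ w : ℝ → ℝ,
      w = fun t => -(x t) * ((a + d - b - c) * x t + (b - d) - g t * (1 - x t)) := ⟨_, rfl⟩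
  have hLD' : ∀ t, 0 ≤ t → HasDerivAt (fun s => Real.log (1 - x s)) (LD t) t := by
    intro t ht
    have hone : HasDerivAt (fun s => (1:ℝ) - x s) (0 - XD t) t :=
      (hasDerivAt_const t (1:ℝ)).sub (hx' t ht)
    have hL := hone.log (ne_of_gt (h1x t ht))
    convert hL using 1
    simp only [hLDdef, hXDdef]
    rw [eq_div_iff (ne_of_gt (h1x t ht))]
    ring
  -- MAIN STEP: x eventually drops below xs
  have hex : ∃ T, 0 ≤ T ∧ x T < xs := by
    by_contra hcon
    push_neg at hcon
    -- m : positive lower bound of φ on [xs,1]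
    obtain ⟨y₀, hy₀, hy₀min⟩ := isCompact_Icc.exists_isMinOn
      (Set.nonempty_Icc.2 hxs1.le) hφc.continuousOn
    have hmpos : 0 < φ y₀ := h2 y₀ (lt_of_lt_of_le hδ hy₀.1) hy₀.2
    have hm : ∀ t, 0 ≤ t → φ y₀ ≤ φ (x t) := fun t ht =>
      isMinOn_iff.1 hy₀min (x t) ⟨hcon t ht, (hxub t ht).le⟩
    -- c₀ : φ exceeds a - c on [1-ε₀, 1] with compact margin
    obtain ⟨y₁, hy₁, hy₁min⟩ := isCompact_Icc.exists_isMinOn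
      (Set.nonempty_Icc.2 (by linarith : 1 - ε₀ ≤ (1:ℝ))) hφc.continuousOn
    have hc₀pos : a - c < φ y₁ := hε₀ y₁ hy₁.1 hy₁.2
    -- the function z = log g + log (1-x)
    obtain ⟨Z, hZdef⟩ : ∃ w : ℝ → ℝ, w = fun t => Real.log (g t) + Real.log (1 - x t) := ⟨_, rfl⟩
    obtain ⟨ZD, hZDdef⟩ : ∃ w : ℝ → ℝ, w = fun t => φ (x t) + LD t := ⟨_, rfl⟩
    have hz' : ∀ t, 0 ≤ t → HasDerivAt Z (ZD t) t := by
      intro t ht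
      simp only [hZdef, hZDdef]
      exact (hlgD t ht).add (hLD' t ht)
    have hy : ∀ t, 0 ≤ t → 0 < g t * (1 - x t) :=
      fun t ht => mul_pos (hgpos t ht) (h1x t ht)
    have hexpz : ∀ t, 0 ≤ t → Real.exp (Z t) = g t * (1 - x t) := by
      intro t ht
      simp only [hZdef]
      rw [Real.exp_add, Real.exp_log (hgpos t ht), Real.exp_log (h1x t ht)]
    -- key inequalities
    have hKI : ∀ t, 0 ≤ t → φ y₀ - (a - c) + xs * (g t * (1 - x t)) ≤ ZD t := by
      intro t ht
      simp only [hZDdef, hLDdef]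
      have hh1 := hm t ht
      have hh2 := hxF (x t) (le_trans hxspos.le (hcon t ht)) (hxub t ht).le
      have hh3 : xs * (g t * (1 - x t)) ≤ x t * (g t * (1 - x t)) :=
        mul_le_mul_of_nonneg_right (hcon t ht) (hy t ht).le
      nlinarith
    have hKI2 : ∀ t, 0 ≤ t → 1 - ε₀ ≤ x t → φ y₁ - (a - c) ≤ ZD t := by
      intro t ht hxt
      simp only [hZDdef, hLDdef]
      have hh2 := hxF (x t) (le_trans hxspos.le (hcon t ht)) (hxub t ht).le
      have hh3 : 0 ≤ x t * (g t * (1 - x t)) :=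
        mul_nonneg (le_trans hxspos.le (hcon t ht)) (hy t ht).le
      have hh1 : φ y₁ ≤ φ (x t) := isMinOn_iff.1 hy₁min (x t) ⟨hxt, (hxub t ht).le⟩
      nlinarith
    -- growth of log g
    have hlg : ∀ t, 0 ≤ t → Real.log (g 0) + φ y₀ * t ≤ Real.log (g t) := by
      intro t ht
      have hmono := mono_Ici (f := fun s => Real.log (g s) - φ y₀ * s)
        (d := fun s => φ (x s) - φ y₀) (T := 0)
        (fun s hs => hasDerivAt_linear_shift (hlgD s hs))
        (fun s hs => by show (0:ℝ) ≤ φ (x s) - φ y₀; linarith [hm s hs])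
      have h : Real.log (g 0) - φ y₀ * 0 ≤ Real.log (g t) - φ y₀ * t := hmono 0 t le_rfl ht
      simp only [mul_zero, sub_zero] at h
      linarith
    -- Z gets arbitrarily large at some time
    have hZP : ∀ W : ℝ, ∃ t₀, 0 ≤ t₀ ∧ W ≤ Z t₀ := by
      intro W
      by_cases hp : ∀ᶠ t in atTop, 1 - ε₀ < x t
      · obtain ⟨t₁', ht₁'⟩ := eventually_atTop.1 hp
        obtain ⟨t₁, ht₁def⟩ : ∃ w : ℝ, w = max t₁' 0 := ⟨_, rfl⟩
        have ht₁0 : (0:ℝ) ≤ t₁ := by rw [ht₁def]; exact le_max_right _ _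
        obtain ⟨c₀, hc₀def⟩ : ∃ w : ℝ, w = φ y₁ - (a - c) := ⟨_, rfl⟩
        have hc₀ : 0 < c₀ := by simp only [hc₀def]; linarith
        have hgrow := mono_Ici (f := fun s => Z s - c₀ * s) (d := fun s => ZD s - c₀)
          (T := t₁)
          (fun s hs => hasDerivAt_linear_shift (hz' s (le_trans ht₁0 hs)))
          (fun s hs => by
            have := hKI2 s (le_trans ht₁0 hs)
              (le_of_lt (ht₁' s (le_trans (ht₁def ▸ le_max_left _ _) hs)))
            simp only [hc₀def]
            linarith)
        obtain ⟨t₀, ht₀def⟩ : ∃ w : ℝ, w = t₁ + max 0 ((W - Z t₁) / c₀) + 1 := ⟨_, rfl⟩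
        have ht₀ : t₁ ≤ t₀ := by
          have := le_max_left (0:ℝ) ((W - Z t₁) / c₀)
          simp only [ht₀def]
          linarith
        refine ⟨t₀, le_trans ht₁0 ht₀, ?_⟩
        have h : Z t₁ - c₀ * t₁ ≤ Z t₀ - c₀ * t₀ := hgrow t₁ t₀ le_rfl ht₀
        have h2 : (W - Z t₁) / c₀ ≤ max 0 ((W - Z t₁) / c₀) := le_max_right _ _
        have h3 : c₀ * ((W - Z t₁) / c₀) = W - Z t₁ := by field_simp
        have h4 : c₀ * ((W - Z t₁) / c₀) ≤ c₀ * max 0 ((W - Z t₁) / c₀) :=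
          mul_le_mul_of_nonneg_left h2 hc₀.le
        have h5 : c₀ * t₀ = c₀ * t₁ + c₀ * max 0 ((W - Z t₁) / c₀) + c₀ := by
          rw [ht₀def]; ring
        linarith
      · rw [Filter.not_eventually] at hp
        simp only [not_lt] at hp
        obtain ⟨t₀, ht₀ge, hxt₀⟩ := frequently_atTop.1 hp
          (max 0 ((W - Real.log (g 0) - Real.log ε₀) / φ y₀))
        have ht₀0 : 0 ≤ t₀ := le_trans (le_max_left _ _) ht₀ge
        refine ⟨t₀, ht₀0, ?_⟩
        have hloggrow := hlg t₀ ht₀0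
        have hlog2 : Real.log ε₀ ≤ Real.log (1 - x t₀) :=
          Real.log_le_log hε₀pos (by linarith)
        have hφt : (W - Real.log (g 0) - Real.log ε₀) / φ y₀ ≤ t₀ :=
          le_trans (le_max_right _ _) ht₀ge
        have hW : W - Real.log (g 0) - Real.log ε₀ ≤ φ y₀ * t₀ := by
          rw [div_le_iff₀ hmpos] at hφt
          linarith
        simp only [hZdef]
        linarith
    -- threshold
    obtain ⟨CC, hCCdef⟩ : ∃ w : ℝ, w = (2 + |a - c| + |φ y₀|) / xs := ⟨_, rfl⟩
    have hCC : 0 < CC := by rw [hCCdef]; exact div_pos (by positivity) hxspos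
    have hxsCC : xs * CC = 2 + |a - c| + |φ y₀| := by
      rw [hCCdef, mul_div_cancel₀ _ (ne_of_gt hxspos)]
    obtain ⟨t₀, ht₀0, hZt₀⟩ := hZP (Real.log CC + 1)
    have hZstay : ∀ t, t₀ ≤ t → Real.log CC < Z t := by
      apply stay_above (d := ZD) (fun t ht => hz' t (le_trans ht₀0 ht)) (by linarith)
      intro t htt hZt
      have ht0 : 0 ≤ t := le_trans ht₀0 htt.le
      have hKIt := hKI t ht0
      have hyCC : g t * (1 - x t) = CC := by
        rw [← hexpz t ht0, hZt, Real.exp_log hCC]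
      rw [hyCC] at hKIt
      nlinarith [le_abs_self (a - c), neg_abs_le (φ y₀)]
    -- now log(1-x) grows at rate ≥ 2, contradiction
    have hLD2 : ∀ t, t₀ ≤ t → 2 ≤ LD t := by
      intro t htt
      have ht0 : 0 ≤ t := le_trans ht₀0 htt
      have hh2 := hxF (x t) (le_trans hxspos.le (hcon t ht0)) (hxub t ht0).le
      have hy' : CC ≤ g t * (1 - x t) := by
        rw [← Real.exp_log hCC, ← hexpz t ht0]
        exact Real.exp_le_exp.2 (hZstay t htt).le
      have hh3 : xs * CC ≤ x t * (g t * (1 - x t)) :=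
        mul_le_mul (hcon t ht0) hy' hCC.le (le_trans hxspos.le (hcon t ht0))
      simp only [hLDdef]
      nlinarith [le_abs_self (a - c), neg_abs_le (φ y₀), abs_nonneg (φ y₀), hh2, hh3, hxsCC]
    have hgrow2 := mono_Ici (f := fun s => Real.log (1 - x s) - 2 * s)
      (d := fun s => LD s - 2) (T := t₀)
      (fun s hs => hasDerivAt_linear_shift (hLD' s (le_trans ht₀0 hs)))
      (fun s hs => by show (0:ℝ) ≤ LD s - 2; linarith [hLD2 s hs])
    obtain ⟨t₃, ht₃def⟩ : ∃ w : ℝ, w = t₀ + (max 0 (-(Real.log (1 - x t₀)))) / 2 + 1 := ⟨_, rfl⟩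
    have hmax := le_max_right (0:ℝ) (-(Real.log (1 - x t₀)))
    have hmax0 := le_max_left (0:ℝ) (-(Real.log (1 - x t₀)))
    have ht₃ : t₀ ≤ t₃ := by simp only [ht₃def]; linarith
    have h : Real.log (1 - x t₀) - 2 * t₀ ≤ Real.log (1 - x t₃) - 2 * t₃ :=
      hgrow2 t₀ t₃ le_rfl ht₃
    have ht₃0 : 0 ≤ t₃ := le_trans ht₀0 ht₃
    have hlog3 : Real.log (1 - x t₃) ≤ 0 :=
      Real.log_nonpos (by linarith [h1x t₃ ht₃0])
        (by linarith [hcon t₃ ht₃0, hxspos])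
    linarith [ht₃def.ge, ht₃def.le]
  -- x eventually stays below any level ρ ∈ (0, xs)
  have hXDneg : ∀ v, 0 < v → v < xs → ∀ t, 0 < t → x t = v → XD t < 0 := by
    intro v hv0 hvxs t ht hxtv
    have hg := hgpos t ht.le
    simp only [hXDdef]
    rw [hxtv]
    have hF : (a + d - b - c) * v + (b - d) < 0 := by
      have hlt : (a + d - b - c) * v < (a + d - b - c) * xs :=
        mul_lt_mul_of_pos_left hvxs hA
      rw [hAxs] at hlt
      linarith
    have hfac2 : (a + d - b - c) * v + (b - d) - g t * (1 - v) < 0 := by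
      nlinarith [mul_pos hg (show (0:ℝ) < 1 - v by linarith [hxs1])]
    have hfac1 : 0 < v * (1 - v) := mul_pos hv0 (by linarith [hxs1])
    exact mul_neg_of_pos_of_neg hfac1 hfac2
  have hev : ∀ ρ, 0 < ρ → ρ < xs → ∃ T₂, 0 ≤ T₂ ∧ ∀ t, T₂ ≤ t → x t < ρ := by
    intro ρ hρ0 hρxs
    obtain ⟨T, hT0, hxT⟩ := hex
    have hstep : ∃ t₁, T ≤ t₁ ∧ x t₁ < ρ := by
      by_contra hcon
      push_neg at hcon
      obtain ⟨v, hvdef⟩ : ∃ w : ℝ, w = (x T + xs) / 2 := ⟨_, rfl⟩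
      have hxTv : x T < v := by simp only [hvdef]; linarith
      have hvxs : v < xs := by simp only [hvdef]; linarith
      have hvpos : 0 < v := by
        have := hxlb T hT0
        simp only [hvdef]; linarith
      have hbelow : ∀ t, T ≤ t → x t < v := by
        apply stay_below (d := XD) (fun t htT => hx' t (le_trans hT0 htT)) hxTv
        intro t htT hxt
        exact hXDneg v hvpos hvxs t (lt_of_le_of_lt hT0 htT) hxt
      have hρv : ρ ≤ v := le_trans (hcon T le_rfl) (hbelow T le_rfl).le
      obtain ⟨s₀, hs₀, hmax⟩ := isCompact_Icc.exists_isMaxOn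
        (Set.nonempty_Icc.2 hρv)
        (Continuous.continuousOn (by continuity :
          Continuous (fun u : ℝ => u * (1 - u) * ((a + d - b - c) * u + (b - d)))))
      have hs₀neg : s₀ * (1 - s₀) * ((a + d - b - c) * s₀ + (b - d)) < 0 := by
        have hh1 : 0 < s₀ := lt_of_lt_of_le hρ0 hs₀.1
        have hh2 : s₀ < xs := lt_of_le_of_lt hs₀.2 hvxs
        have hF : (a + d - b - c) * s₀ + (b - d) < 0 := by
          have hlt : (a + d - b - c) * s₀ < (a + d - b - c) * xs :=
            mul_lt_mul_of_pos_left hh2 hA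
          rw [hAxs] at hlt
          linarith
        exact mul_neg_of_pos_of_neg (mul_pos hh1 (by linarith [hxs1])) hF
      obtain ⟨η, hηdef⟩ : ∃ w : ℝ, w = -(s₀ * (1 - s₀) * ((a + d - b - c) * s₀ + (b - d))) := ⟨_, rfl⟩
      have hηpos : 0 < η := by simp only [hηdef]; linarith
      have hXDle : ∀ t, T ≤ t → XD t ≤ -η := by
        intro t ht'
        have hmx := isMaxOn_iff.1 hmax (x t) ⟨hcon t ht', (hbelow t ht').le⟩
        have hh1 : 0 ≤ x t := hxlb t (le_trans hT0 ht')
        have hh2 : x t < 1 := hxub t (le_trans hT0 ht')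
        have hh4 : 0 < g t := hgpos t (le_trans hT0 ht')
        simp only [hXDdef, hηdef]
        nlinarith [mul_nonneg (mul_nonneg hh1 (show (0:ℝ) ≤ 1 - x t by linarith))
          (mul_nonneg hh4.le (show (0:ℝ) ≤ 1 - x t by linarith))]
      have hmono := mono_Ici (f := fun t => -(x t) - η * t)
        (d := fun t => -(XD t) - η) (T := T)
        (fun t ht' => hasDerivAt_linear_shift (hx' t (le_trans hT0 ht')).neg)
        (fun t ht' => by show (0:ℝ) ≤ -(XD t) - η; linarith [hXDle t ht'])
      obtain ⟨t', ht'def⟩ : ∃ w : ℝ, w = T + (x T + 1) / η := ⟨_, rfl⟩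
      have ht'T : T ≤ t' := by
        have : 0 ≤ (x T + 1) / η := div_nonneg (by linarith [hxlb T hT0]) hηpos.le
        simp only [ht'def]; linarith
      have h : -(x T) - η * T ≤ -(x t') - η * t' := hmono T t' le_rfl ht'T
      have hxt' : 0 ≤ x t' := hxlb t' (le_trans hT0 ht'T)
      have h5 : η * t' = η * T + (x T + 1) := by
        rw [ht'def]; field_simp
      linarith
    obtain ⟨t₁, ht₁T, hxt₁⟩ := hstep
    have ht₁0 : 0 ≤ t₁ := le_trans hT0 ht₁T
    refine ⟨t₁, ht₁0, ?_⟩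
    apply stay_below (d := XD) (fun t ht => hx' t (le_trans ht₁0 ht)) hxt₁
    intro t htt hxt
    exact hXDneg ρ hρ0 hρxs t (lt_of_le_of_lt ht₁0 htt) hxt
  -- conclusion for x
  have htx : Filter.Tendsto x Filter.atTop (nhds 0) := by
    rw [Metric.tendsto_atTop]
    intro ε hε
    obtain ⟨T₂, hT₂0, hT₂⟩ := hev (min (ε / 2) (xs / 2))
      (lt_min (by linarith) (by linarith)) (by
        calc min (ε / 2) (xs / 2) ≤ xs / 2 := min_le_right _ _
          _ < xs := by linarith)
    refine ⟨T₂, fun t ht' => ?_⟩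
    have hh1 := hxlb t (le_trans hT₂0 ht')
    have hh2 := hT₂ t ht'
    have hh3 : min (ε / 2) (xs / 2) ≤ ε / 2 := min_le_left _ _
    rw [Real.dist_eq, sub_zero, abs_of_nonneg hh1]
    linarith
  refine ⟨htx, ?_⟩
  -- conclusion for g
  obtain ⟨T₃, hT₃0, hT₃⟩ := hev (δ / 2) (by linarith) (by linarith)
  obtain ⟨s₁, hs₁, hKmax⟩ := isCompact_Icc.exists_isMaxOn
    (Set.nonempty_Icc.2 (by linarith : (0:ℝ) ≤ δ / 2)) hφc.continuousOn
  have hKneg : φ s₁ < 0 := h1 s₁ hs₁.1 (by linarith [hs₁.2])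
  have hφle : ∀ t, T₃ ≤ t → φ (x t) ≤ φ s₁ := fun t ht' =>
    isMaxOn_iff.1 hKmax (x t) ⟨hxlb t (le_trans hT₃0 ht'), (hT₃ t ht').le⟩
  have hmono := mono_Ici (f := fun t => -(g t * Real.exp (-φ s₁ * t)))
    (d := fun t => -((φ (x t) * g t + -φ s₁ * g t) * Real.exp (-φ s₁ * t))) (T := T₃)
    (fun t ht' => (hasDerivAt_mul_exp (hg' t (le_trans hT₃0 ht'))).neg)
    (fun t ht' => by
      have hgp := hgpos t (le_trans hT₃0 ht')
      have hep := Real.exp_pos (-φ s₁ * t)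
      have hfl := hφle t ht'
      show (0:ℝ) ≤ -((φ (x t) * g t + -φ s₁ * g t) * Real.exp (-φ s₁ * t))
      nlinarith [mul_nonneg (mul_nonneg (sub_nonneg.2 hfl) hgp.le) hep.le])
  have hgle : ∀ t, T₃ ≤ t →
      g t ≤ (g T₃ * Real.exp (-φ s₁ * T₃)) * Real.exp (φ s₁ * t) := by
    intro t ht'
    have h := hmono T₃ t le_rfl ht'
    simp only [neg_le_neg_iff] at h
    have h2 : g t * Real.exp (-φ s₁ * t) ≤ g T₃ * Real.exp (-φ s₁ * T₃) := by linarith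
    have hkey : g t = g t * Real.exp (-φ s₁ * t) * Real.exp (φ s₁ * t) := by
      rw [mul_assoc, ← Real.exp_add]
      simp
    rw [hkey]
    exact mul_le_mul_of_nonneg_right h2 (Real.exp_pos _).le
  have hlim : Filter.Tendsto (fun t => (g T₃ * Real.exp (-φ s₁ * T₃)) * Real.exp (φ s₁ * t))
      Filter.atTop (nhds 0) := by
    rw [show (0:ℝ) = (g T₃ * Real.exp (-φ s₁ * T₃)) * 0 by ring]
    apply Filter.Tendsto.const_mul
    apply Real.tendsto_exp_atBot.comp
    exact (tendsto_const_mul_atBot_of_neg hKneg).2 tendsto_id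
  apply squeeze_zero' (g := fun t => (g T₃ * Real.exp (-φ s₁ * T₃)) * Real.exp (φ s₁ * t))
  · filter_upwards [eventually_ge_atTop (max T₃ 0)] with t ht'
    exact (hgpos t (le_trans (le_max_right _ _) ht')).le
  · filter_upwards [eventually_ge_atTop (max T₃ 0)] with t ht'
    exact hgle t (le_trans (le_max_left _ _) ht')
  · exact hlim
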